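/- Let R = ℝ[P₄,…,P_{2n-2}] and S = ℝ[u, P'₄,…,P'_{2n-6}] with φ : R → S[u^{-1}] defined by φ(P_{2n-2}) = u²P'_{2n-6}, φ(P_j) = u²P'_{j-4} + P'_j for 4 ≤ j ≤ 2n−6 (with P'₀ := 1). Then φ is injective. -/

import Mathlib

/-!
STATEMENT 15: Let `R = ℝ[P₄, …, P_{2n-2}]` and `S = ℝ[u, P'₄, …, P'_{2n-6}]` with
`φ : R → S[u⁻¹]` defined by `φ(P_{2n-2}) = u²·P'_{2n-6}` and `φ(P_j) = u²·P'_{j-4} + P'_j` for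
`4 ≤ j ≤ 2n-6` (with `P'₀ := 1`).  Then `φ` is injective.

This is the odd-`n` analogue of the restriction map
`H(BSO(n)) → H(B(SO(2)×SO(n-2)))[u⁻¹]`, `deg u = 2` being the Euler class of `SO(2)`.
We write `m` for the number of generators of the source (`P₄, …, P_{4m}` with `4m = 2n - 2`),
so the source is the polynomial ring on `Fin m` (`i ↦ P_{4(i+1)}`), and `S[u⁻¹]` is the ring of
Laurent polynomials in `u` over the polynomial ring on `Fin (m-1)` (`i ↦ P'_{4(i+1)}`); `u = T 1`
and `u² = T 2` in Laurent polynomial notation.  We assume `m ≥ 2` (i.e. `n ≥ 5`, so that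
`P'_{2n-6}` exists, as in the statement).
-/

open MvPolynomial LaurentPolynomial

/-- The restriction map `H(BSO(n)) → H(B(SO(2)×SO(n-2)))[u⁻¹]` for `n` odd. -/
noncomputable def oddRestriction (m : ℕ) (hm : 2 ≤ m) :
    MvPolynomial (Fin m) ℝ →ₐ[ℝ]
      LaurentPolynomial (MvPolynomial (Fin (m - 1)) ℝ) :=
  MvPolynomial.aeval (fun i : Fin m =>
    if h : (i : ℕ) = m - 1 then
      -- top class: P_{2n-2} ↦ u²·P'_{2n-6}
      T 2 * LaurentPolynomial.C (X (⟨m - 2, by omega⟩ : Fin (m - 1)))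
    else
      -- P_{4(i+1)} ↦ u²·P'_{4i} + P'_{4(i+1)}, with P'₀ = 1
      T 2 * (if h0 : (i : ℕ) = 0 then 1
             else LaurentPolynomial.C
               (X (⟨(i : ℕ) - 1, by have := i.isLt; omega⟩ : Fin (m - 1)))) +
        LaurentPolynomial.C (X (⟨(i : ℕ), by have := i.isLt; omega⟩ : Fin (m - 1))))

noncomputable def epsAux {σ : Type*} (y : σ → ℝ) (t : ℝˣ) :
    LaurentPolynomial (MvPolynomial σ ℝ) →+* ℝ :=
  AddMonoidAlgebra.liftNCRingHom (MvPolynomial.eval y) ((Units.coeHom ℝ).comp (zpowersHom ℝˣ t))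
    fun _ _ => Commute.all _ _

lemma epsAux_single {σ : Type*} (y : σ → ℝ) (t : ℝˣ) (n : ℤ) (q : MvPolynomial σ ℝ) :
    epsAux y t (AddMonoidAlgebra.single n q) = MvPolynomial.eval y q * (t : ℝ) ^ n := by
  have h : epsAux y t (AddMonoidAlgebra.single n q) =
      AddMonoidAlgebra.liftNC (↑(MvPolynomial.eval y : MvPolynomial σ ℝ →+* ℝ) : _ →+ ℝ)
        ((Units.coeHom ℝ).comp (zpowersHom ℝˣ t)) (AddMonoidAlgebra.single n q) := rfl
  rw [h, AddMonoidAlgebra.liftNC_single]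
  simp

lemma epsAux_C {σ : Type*} (y : σ → ℝ) (t : ℝˣ) (q : MvPolynomial σ ℝ) :
    epsAux y t (LaurentPolynomial.C q) = MvPolynomial.eval y q := by
  rw [← LaurentPolynomial.single_eq_C, epsAux_single]; simp

lemma epsAux_T {σ : Type*} (y : σ → ℝ) (t : ℝˣ) (n : ℤ) :
    epsAux y t (LaurentPolynomial.T n) = (t : ℝ) ^ n := by
  rw [LaurentPolynomial.T, epsAux_single]; simp

/-- Step 1: real-point evaluation of the relation `φ p = 0`. -/
lemma step1 (m : ℕ) (hm : 2 ≤ m) (p : MvPolynomial (Fin m) ℝ)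
    (hp : oddRestriction m hm p = 0) (t : ℝ) (ht : t ≠ 0) (y : Fin (m - 1) → ℝ) :
    MvPolynomial.eval (fun i : Fin m =>
      if h : (i : ℕ) = m - 1 then t ^ 2 * y ⟨m - 2, by omega⟩
      else t ^ 2 * (if h0 : (i : ℕ) = 0 then 1
            else y ⟨(i : ℕ) - 1, by have := i.isLt; omega⟩) +
        y ⟨(i : ℕ), by have := i.isLt; omega⟩) p = 0 := by
  set tu : ℝˣ := Units.mk0 t ht with htu
  have ht2 : (tu : ℝ) ^ (2 : ℤ) = t ^ 2 := by rw [htu]; norm_num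
  have hcomp : (epsAux y tu).comp
      ((oddRestriction m hm) : MvPolynomial (Fin m) ℝ →+* _) =
      (MvPolynomial.eval (fun i : Fin m =>
        if h : (i : ℕ) = m - 1 then t ^ 2 * y ⟨m - 2, by omega⟩
        else t ^ 2 * (if h0 : (i : ℕ) = 0 then 1
              else y ⟨(i : ℕ) - 1, by have := i.isLt; omega⟩) +
          y ⟨(i : ℕ), by have := i.isLt; omega⟩) :
        MvPolynomial (Fin m) ℝ →+* ℝ) := by
    apply MvPolynomial.ringHom_ext
    · intro r
      simp only [RingHom.coe_comp, Function.comp_apply, AlgHom.coe_toRingHom,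
        MvPolynomial.eval_C]
      rw [show ((oddRestriction m hm) (MvPolynomial.C r) :
            LaurentPolynomial (MvPolynomial (Fin (m-1)) ℝ)) =
          LaurentPolynomial.C (MvPolynomial.C r) by
        simp [oddRestriction, MvPolynomial.aeval_C, LaurentPolynomial.algebraMap_apply,
          MvPolynomial.algebraMap_eq]]
      rw [epsAux_C]
      simp
    · intro i
      simp only [RingHom.coe_comp, Function.comp_apply, AlgHom.coe_toRingHom,
        MvPolynomial.eval_X]
      rw [show ((oddRestriction m hm) (MvPolynomial.X i)) = _ from MvPolynomial.aeval_X _ i]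
      by_cases h : (i : ℕ) = m - 1
      · rw [dif_pos h, dif_pos h, map_mul, epsAux_C, epsAux_T, ht2]
        simp
      · rw [dif_neg h, dif_neg h, map_add, map_mul, epsAux_T, epsAux_C, ht2]
        by_cases h0 : (i : ℕ) = 0
        · rw [dif_pos h0, dif_pos h0, map_one]
          simp
        · rw [dif_neg h0, dif_neg h0, epsAux_C]
          simp
  have hfp := RingHom.congr_fun hcomp p
  simp only [RingHom.coe_comp, Function.comp_apply, AlgHom.coe_toRingHom] at hfp
  rw [hp, map_zero] at hfp
  exact hfp.symm


lemma aux_one (N d : ℕ) (hN : 0 < N) (G : Polynomial ℝ) (hG : G.Monic)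
    (hdeg : G.natDegree = N + d) (q : Polynomial ℝ)
    (h : ∀ t : ℝ, t ≠ 0 → q.eval (G.eval t / t ^ d) = 0) : q = 0 := by
  by_contra hq
  set D := q.natDegree with hD
  set H : Polynomial ℝ :=
    ∑ j ∈ Finset.range (D + 1), Polynomial.C (q.coeff j) * G ^ j * Polynomial.X ^ (d * (D - j)) with hH
  have hHroot : ∀ t : ℝ, t ≠ 0 → H.eval t = 0 := by
    intro t ht
    have h1 : q.eval (G.eval t / t ^ d) = 0 := h t ht
    have h2 : H.eval t = ∑ j ∈ Finset.range (D + 1),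
        q.coeff j * (G.eval t) ^ j * t ^ (d * (D - j)) := by
      rw [hH, Polynomial.eval_finset_sum]
      refine Finset.sum_congr rfl fun j hj => ?_
      simp [Polynomial.eval_mul, Polynomial.eval_pow]
    have h3 : q.eval (G.eval t / t ^ d) * t ^ (d * D) = ∑ j ∈ Finset.range (D + 1),
        q.coeff j * (G.eval t) ^ j * t ^ (d * (D - j)) := by
      rw [Polynomial.eval_eq_sum_range, Finset.sum_mul]
      refine Finset.sum_congr rfl fun j hj => ?_
      rw [Finset.mem_range] at hj
      have hjD : j ≤ D := Nat.lt_succ_iff.mp hj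
      have hsplit : t ^ (d * D) = t ^ (d * (D - j)) * t ^ (d * j) := by
        rw [← pow_add, ← Nat.mul_add, Nat.sub_add_cancel hjD]
      rw [div_pow, ← pow_mul, hsplit]
      have ht' : (t : ℝ) ^ (d * j) ≠ 0 := pow_ne_zero _ ht
      field_simp
    rw [h2] at *
    rw [h1, zero_mul] at h3
    exact h3.symm ▸ rfl
  have hH0 : H = 0 := by
    refine Polynomial.eq_zero_of_infinite_isRoot H ?_
    refine Set.Infinite.mono ?_ ((Set.finite_singleton (0:ℝ)).infinite_compl)
    intro t ht
    exact hHroot t ht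
  have hcoeff : H.coeff ((N + d) * D) = q.coeff D := by
    rw [hH, Polynomial.finset_sum_coeff]
    rw [Finset.sum_eq_single D]
    · rw [Nat.sub_self, mul_zero, pow_zero, mul_one, Polynomial.coeff_C_mul]
      have hnd : ((N + d) * D) = (G ^ D).natDegree := by
        rw [Polynomial.natDegree_pow, hdeg]; ring
      rw [hnd, (hG.pow D).coeff_natDegree, mul_one]
    · intro j hj hjD
      rw [Finset.mem_range] at hj
      have hjlt : j < D := lt_of_le_of_ne (Nat.lt_succ_iff.mp hj) hjD
      rw [mul_assoc, Polynomial.coeff_C_mul]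
      have hz : (G ^ j * Polynomial.X ^ (d * (D - j))).coeff ((N + d) * D) = 0 := by
        apply Polynomial.coeff_eq_zero_of_natDegree_lt
        apply lt_of_le_of_lt (Polynomial.natDegree_mul_le)
        rw [Polynomial.natDegree_pow, Polynomial.natDegree_X_pow, hdeg]
        have h4 : d * (D - j) + d * j = d * D := by rw [← Nat.mul_add]; congr 1; omega
        have h5 : N * j < N * D := (Nat.mul_lt_mul_left hN).mpr hjlt
        nlinarith [h4, h5]
      rw [hz, mul_zero]
    · intro hD'
      simp at hD'
  rw [hH0] at hcoeff
  have hlc : q.coeff D = q.leadingCoeff := rfl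
  rw [hlc] at hcoeff
  exact hq (Polynomial.leadingCoeff_eq_zero.mp hcoeff.symm)

theorem stmt_15 (m : ℕ) (hm : 2 ≤ m) : Function.Injective (oddRestriction m hm) := by
  rw [injective_iff_map_eq_zero]
  intro p hp
  have hall : ∀ a : Fin m → ℝ, MvPolynomial.eval a p = 0 := by
    intro a
    set A : ℕ → ℝ := fun n => if h : n < m then a ⟨n, h⟩ else 0 with hA
    set yN : ℝ → ℕ → ℝ := fun t k =>
      ∑ j ∈ Finset.range (m - 1 - k), (-1 : ℝ) ^ j * A (k + 1 + j) / t ^ (2 * (j + 1)) with hyN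
    have tele : ∀ t : ℝ, t ≠ 0 → ∀ k : ℕ, k < m - 1 →
        t ^ 2 * yN t k = A (k + 1) - yN t (k + 1) := by
      intro t ht k hk
      have hs : m - 1 - k = (m - 1 - (k + 1)) + 1 := by omega
      show t ^ 2 * ∑ j ∈ Finset.range (m - 1 - k), (-1:ℝ)^j * A (k+1+j) / t ^ (2*(j+1))
          = A (k+1) - ∑ j ∈ Finset.range (m - 1 - (k+1)), (-1:ℝ)^j * A (k+1+1+j) / t ^ (2*(j+1))
      rw [hs, Finset.sum_range_succ', mul_add, Finset.mul_sum]
      have h1 : ∀ j ∈ Finset.range (m - 1 - (k+1)),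
          t ^ 2 * ((-1:ℝ)^(j+1) * A (k+1+(j+1)) / t ^ (2*(j+1+1)))
          = -((-1:ℝ)^j * A (k+1+1+j) / t ^ (2*(j+1))) := by
        intro j _
        have hidx : k+1+(j+1) = k+1+1+j := by omega
        have hpow : (2:ℕ)*(j+1+1) = 2*(j+1)+2 := by ring
        rw [hidx, hpow, pow_add, pow_succ]
        field_simp
        ring
      rw [Finset.sum_congr rfl h1, Finset.sum_neg_distrib]
      have h2 : t ^ 2 * ((-1:ℝ)^0 * A (k+1+0) / t ^ (2*(0+1))) = A (k+1) := by
        norm_num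
        field_simp
      rw [h2]
      ring
    set G : Polynomial ℝ := Polynomial.X ^ (2*m) +
      ∑ j ∈ Finset.range (m-1), Polynomial.C ((-1:ℝ)^j * A (0+1+j)) * Polynomial.X ^ (2*(m-2-j))
      with hG
    have hGsumdeg : (∑ j ∈ Finset.range (m-1),
        Polynomial.C ((-1:ℝ)^j * A (0+1+j)) * Polynomial.X ^ (2*(m-2-j))).degree
        < ((2*m : ℕ) : WithBot ℕ) := by
      apply lt_of_le_of_lt (Polynomial.degree_sum_le _ _)
      rw [Finset.sup_lt_iff (by exact WithBot.bot_lt_coe _)]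
      intro j hj
      calc (Polynomial.C ((-1:ℝ)^j * A (0+1+j)) * Polynomial.X ^ (2*(m-2-j))).degree
          ≤ (Polynomial.C ((-1:ℝ)^j * A (0+1+j))).degree
            + (Polynomial.X ^ (2*(m-2-j)) : Polynomial ℝ).degree := Polynomial.degree_mul_le _ _
        _ ≤ 0 + ((2*(m-2-j) : ℕ) : WithBot ℕ) :=
            add_le_add Polynomial.degree_C_le (le_of_eq (Polynomial.degree_X_pow _))
        _ < ((2*m : ℕ) : WithBot ℕ) := by
            rw [zero_add]
            exact_mod_cast (by omega : 2*(m-2-j) < 2*m)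
    have hGmonic : G.Monic := Polynomial.monic_X_pow_add hGsumdeg
    have hGdeg : G.natDegree = 2*m := by
      have h1 : (∑ j ∈ Finset.range (m-1),
          Polynomial.C ((-1:ℝ)^j * A (0+1+j)) * Polynomial.X ^ (2*(m-2-j))).degree
          < (Polynomial.X ^ (2*m) : Polynomial ℝ).degree := by
        rw [Polynomial.degree_X_pow]; exact hGsumdeg
      have h2 : G.degree = ((2*m : ℕ) : WithBot ℕ) := by
        rw [hG, Polynomial.degree_add_eq_left_of_degree_lt h1, Polynomial.degree_X_pow]
      exact Polynomial.natDegree_eq_of_degree_eq_some h2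
    have hGg : ∀ t : ℝ, t ≠ 0 → G.eval t / t ^ (2*(m-1)) = t^2 + yN t 0 := by
      intro t ht
      rw [div_eq_iff (pow_ne_zero _ ht), hG]
      rw [Polynomial.eval_add, Polynomial.eval_pow, Polynomial.eval_X,
        Polynomial.eval_finset_sum, add_mul]
      congr 1
      · rw [← pow_add]; congr 1; omega
      · show _ = (∑ j ∈ Finset.range (m - 1 - 0), (-1:ℝ)^j * A (0+1+j) / t ^ (2*(j+1)))
            * t ^ (2*(m-1))
        rw [Nat.sub_zero, Finset.sum_mul]
        refine Finset.sum_congr rfl fun j hj => ?_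
        rw [Finset.mem_range] at hj
        simp only [Polynomial.eval_mul, Polynomial.eval_pow, Polynomial.eval_C,
          Polynomial.eval_X]
        have hsp : (2:ℕ)*(m-1) = 2*(j+1) + 2*(m-2-j) := by omega
        rw [hsp, pow_add]
        field_simp
    set q : Polynomial ℝ := MvPolynomial.aeval
      (fun i : Fin m => if (i:ℕ) = 0 then Polynomial.X else Polynomial.C (a i)) p with hq
    have hqeval : ∀ s : ℝ, q.eval s =
        MvPolynomial.eval (fun i : Fin m => if (i:ℕ) = 0 then s else a i) p := by
      intro s
      have hhom : (Polynomial.evalRingHom s).comp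
          ((MvPolynomial.aeval (fun i : Fin m => if (i:ℕ) = 0 then Polynomial.X
            else Polynomial.C (a i)) : MvPolynomial (Fin m) ℝ →ₐ[ℝ] Polynomial ℝ) :
            MvPolynomial (Fin m) ℝ →+* Polynomial ℝ) =
          (MvPolynomial.eval (fun i : Fin m => if (i:ℕ) = 0 then s else a i) :
            MvPolynomial (Fin m) ℝ →+* ℝ) := by
        apply MvPolynomial.ringHom_ext
        · intro r; simp
        · intro i
          simp only [RingHom.coe_comp, Function.comp_apply, AlgHom.coe_toRingHom,
            MvPolynomial.aeval_X, MvPolynomial.eval_X]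
          by_cases h0 : (i:ℕ) = 0 <;> simp [h0]
      have hfp := RingHom.congr_fun hhom p
      simp only [RingHom.coe_comp, Function.comp_apply, AlgHom.coe_toRingHom] at hfp
      rw [hq]
      exact hfp
    have hqroot : ∀ t : ℝ, t ≠ 0 → q.eval (G.eval t / t ^ (2*(m-1))) = 0 := by
      intro t ht
      rw [hqeval, hGg t ht]
      have h1 := step1 m hm p hp t ht (fun k : Fin (m-1) => yN t k)
      have hfun : (fun i : Fin m => if (i:ℕ) = 0 then t^2 + yN t 0 else a i)
          = (fun i : Fin m =>
            if h : (i : ℕ) = m - 1 then t ^ 2 * yN t ((⟨m - 2, by omega⟩ : Fin (m-1)) : ℕ)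
            else t ^ 2 * (if h0 : (i : ℕ) = 0 then 1
                  else yN t ((⟨(i : ℕ) - 1, by have := i.isLt; omega⟩ : Fin (m-1)) : ℕ))
              + yN t ((⟨(i : ℕ), by have := i.isLt; omega⟩ : Fin (m-1)) : ℕ)) := by
        funext i
        by_cases h : (i:ℕ) = m - 1
        · rw [dif_pos h, if_neg (by omega : ¬((i:ℕ) = 0))]
          have ht' := tele t ht (m-2) (by omega)
          rw [show (m-2)+1 = m-1 from by omega] at ht'
          have hz : yN t (m-1) = 0 := by
            show (∑ j ∈ Finset.range (m - 1 - (m-1)), (-1:ℝ)^j * A ((m-1)+1+j)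
              / t ^ (2*(j+1))) = 0
            rw [Nat.sub_self]
            simp
          have hAi : A (m-1) = a i := by
            show (if h' : m - 1 < m then a ⟨m-1, h'⟩ else 0) = a i
            rw [dif_pos (by omega : m - 1 < m)]
            congr 1
            exact Fin.ext h.symm
          show a i = t ^ 2 * yN t (m-2)
          rw [ht', hz, sub_zero, hAi]
        · rw [dif_neg h]
          by_cases h0 : (i:ℕ) = 0
          · rw [if_pos h0, dif_pos h0, mul_one]
            show t^2 + yN t 0 = t^2 + yN t (i:ℕ)
            rw [h0]
          · rw [if_neg h0, dif_neg h0]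
            have ht' := tele t ht ((i:ℕ)-1) (by have := i.isLt; omega)
            rw [show ((i:ℕ)-1)+1 = (i:ℕ) from by omega] at ht'
            have hAi : A (i:ℕ) = a i := by
              show (if h' : (i:ℕ) < m then a ⟨(i:ℕ), h'⟩ else 0) = a i
              rw [dif_pos i.isLt]
            show a i = t ^ 2 * yN t ((i:ℕ)-1) + yN t (i:ℕ)
            rw [ht', ← hAi]
            ring
      rw [hfun]
      exact h1
    have hq0 : q = 0 := aux_one 2 (2*(m-1)) (by norm_num) G hGmonic (by omega) q hqroot
    have hfin : MvPolynomial.eval a p = q.eval (a ⟨0, by omega⟩) := by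
      rw [hqeval]
      have hfa : (fun i : Fin m => if (i:ℕ) = 0 then a ⟨0, by omega⟩ else a i) = a := by
        funext i
        by_cases h0 : (i:ℕ) = 0
        · rw [if_pos h0]
          exact congrArg a (Fin.ext h0.symm)
        · rw [if_neg h0]
      rw [hfa]
    rw [hfin, hq0, Polynomial.eval_zero]
  exact MvPolynomial.funext fun x => by rw [hall x, map_zero]
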